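/- Let q > 3 be an odd prime power and ζ a generator of F_q^×. Then SL₂(F_q) is generated by the two matrices r = [[ζ,0],[0,ζ⁻¹]] and s = [[1,−1],[1,0]]. -/

import Mathlib

open Matrix Polynomial

namespace SL2genAux

variable {F : Type*} [Field F]

theorem sum_two_squares [Fintype F] (hodd : Odd (Fintype.card F)) (x : F) :
    ∃ a b : F, a ^ 2 + b ^ 2 = x := by
  obtain ⟨a, b, hab⟩ := FiniteField.exists_root_sum_quadratic
    (f := (X : F[X]) ^ 2) (g := (X : F[X]) ^ 2 - C x)
    (degree_X_pow 2) (degree_X_pow_sub_C (by norm_num) _) (Nat.odd_iff.mp hodd)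
  refine ⟨a, b, ?_⟩
  simp only [eval_pow, eval_sub, eval_C, eval_X] at hab
  linear_combination hab

/-- The upper elementary matrix `[[1,t],[0,1]]` in `SL₂`. -/
def Xm (t : F) : Matrix.SpecialLinearGroup (Fin 2) F :=
  ⟨!![1, t; 0, 1], by simp [Matrix.det_fin_two]⟩

/-- The lower elementary matrix `[[1,0],[t,1]]` in `SL₂`. -/
def Ym (t : F) : Matrix.SpecialLinearGroup (Fin 2) F :=
  ⟨!![1, 0; t, 1], by simp [Matrix.det_fin_two]⟩

/-- The Weyl element `[[0,-1],[1,0]]` in `SL₂`. -/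
def Wm : Matrix.SpecialLinearGroup (Fin 2) F :=
  ⟨!![0, -1; 1, 0], by simp [Matrix.det_fin_two]⟩

theorem coe_Xm (t : F) : (Xm t : Matrix (Fin 2) (Fin 2) F) = !![1, t; 0, 1] := rfl
theorem coe_Ym (t : F) : (Ym t : Matrix (Fin 2) (Fin 2) F) = !![1, 0; t, 1] := rfl
theorem coe_Wm : ((Wm : Matrix.SpecialLinearGroup (Fin 2) F) : Matrix (Fin 2) (Fin 2) F) = !![0, -1; 1, 0] := rfl

theorem Xm_mul (a b : F) : Xm a * Xm b = Xm (a + b) := by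
  apply Subtype.ext
  rw [Matrix.SpecialLinearGroup.coe_mul, coe_Xm, coe_Xm, coe_Xm, Matrix.mul_fin_two]
  norm_num [add_comm]

theorem Xm_zero : (Xm (0 : F)) = 1 := by
  apply Subtype.ext
  rw [coe_Xm]
  ext i j
  fin_cases i <;> fin_cases j <;> simp

/-- Bruhat-type decomposition of an `SL₂` element with nonzero lower-left entry. -/
theorem decomp (g : Matrix.SpecialLinearGroup (Fin 2) F) (hc : g.1 1 0 ≠ 0) :
    g = Xm ((g.1 0 0 - 1) / g.1 1 0) * Ym (g.1 1 0) * Xm ((g.1 1 1 - 1) / g.1 1 0) := by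
  have hdet : g.1 0 0 * g.1 1 1 - g.1 0 1 * g.1 1 0 = 1 := by
    have := g.2; rwa [Matrix.det_fin_two] at this
  apply Subtype.ext
  rw [Matrix.SpecialLinearGroup.coe_mul, Matrix.SpecialLinearGroup.coe_mul,
    coe_Xm, coe_Ym, coe_Xm, Matrix.mul_fin_two, Matrix.mul_fin_two]
  ext i j
  fin_cases i <;> fin_cases j <;> simp <;> field_simp <;>
    first
      | linear_combination hdet
      | linear_combination -2*hdet
      | linear_combination -hdet
      | ring

/-- If a subgroup of `SL₂(F)` contains all elementary matrices, it is everything. -/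
theorem mem_of_transvections (C : Subgroup (Matrix.SpecialLinearGroup (Fin 2) F))
    (hX : ∀ t : F, Xm t ∈ C) (hY : ∀ t : F, Ym t ∈ C)
    (g : Matrix.SpecialLinearGroup (Fin 2) F) : g ∈ C := by
  by_cases hc : g.1 1 0 = 0
  · have hdet : g.1 0 0 * g.1 1 1 - g.1 0 1 * g.1 1 0 = 1 := by
      have := g.2; rwa [Matrix.det_fin_two] at this
    have ha : g.1 0 0 ≠ 0 := by
      intro h0
      rw [h0, hc] at hdet
      simp at hdet
    have h2 : (Ym 1 * g).1 1 0 ≠ 0 := by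
      rw [Matrix.SpecialLinearGroup.coe_mul, coe_Ym]
      rw [Matrix.eta_fin_two g.1, Matrix.mul_fin_two]
      simpa [hc] using ha
    have hmem : Ym 1 * g ∈ C := by
      rw [decomp (Ym 1 * g) h2]
      exact mul_mem (mul_mem (hX _) (hY _)) (hX _)
    have : g = (Ym 1)⁻¹ * (Ym 1 * g) := by group
    rw [this]
    exact mul_mem (inv_mem (hY 1)) hmem
  · rw [decomp g hc]
    exact mul_mem (mul_mem (hX _) (hY _)) (hX _)

end SL2genAux

open SL2genAux

/-- For `q > 3` an odd prime power and `ζ` a generator of `F_q^×`, the group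
`SL₂(F_q)` is generated by `r = [[ζ,0],[0,ζ⁻¹]]` and `s = [[1,−1],[1,0]]`. -/
theorem SL2_two_generated (F : Type*) [Field F] [Fintype F]
    (hodd : Odd (Fintype.card F)) (hq : 3 < Fintype.card F)
    (ζ : Fˣ) (hζ : ∀ x : Fˣ, x ∈ Subgroup.zpowers ζ)
    (r s : Matrix.SpecialLinearGroup (Fin 2) F)
    (hr : (r : Matrix (Fin 2) (Fin 2) F) = !![(ζ : F), 0; 0, ((ζ⁻¹ : Fˣ) : F)])
    (hs : (s : Matrix (Fin 2) (Fin 2) F) = !![1, -1; 1, 0]) :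
    Subgroup.closure ({r, s} : Set (Matrix.SpecialLinearGroup (Fin 2) F)) = ⊤ := by
  set C := Subgroup.closure ({r, s} : Set (Matrix.SpecialLinearGroup (Fin 2) F)) with hC
  rw [eq_top_iff]
  rintro g -
  have hrC : r ∈ C := Subgroup.subset_closure (by simp)
  have hsC : s ∈ C := Subgroup.subset_closure (by simp)
  set z : F := (ζ : F) with hzdef
  have hz : z ≠ 0 := ζ.ne_zero
  have hzinv : ((ζ⁻¹ : Fˣ) : F) = z⁻¹ := by
    rw [hzdef]; exact Units.val_inv_eq_inv_val ζ
  -- ζ² ≠ 1 since ζ has order q - 1 > 2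
  have hz2 : z ^ 2 ≠ 1 := by
    intro h1
    have hu : ζ ^ 2 = 1 := Units.ext (by push_cast; exact h1)
    have h2 : orderOf ζ ≤ 2 :=
      Nat.le_of_dvd two_pos (orderOf_dvd_of_pow_eq_one hu)
    have h3 : orderOf ζ = Nat.card Fˣ := orderOf_eq_card_of_forall_mem_zpowers hζ
    rw [Nat.card_units, Nat.card_eq_fintype_card] at h3
    omega
  set c : F := 1 - z⁻¹ ^ 2 with hcdef
  have hcne : c ≠ 0 := by
    rw [hcdef]
    intro h
    apply hz2
    have h1 : z⁻¹ ^ 2 = 1 := (sub_eq_zero.mp h).symm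
    rwa [inv_pow, inv_eq_one] at h1
  -- the basic conjugation relation r ⬝ X t ⬝ r⁻¹ = X (z² t)
  have conj : ∀ t : F, r * Xm t = Xm (z ^ 2 * t) * r := by
    intro t
    apply Subtype.ext
    rw [Matrix.SpecialLinearGroup.coe_mul, Matrix.SpecialLinearGroup.coe_mul,
      hr, coe_Xm, coe_Xm, hzinv, Matrix.mul_fin_two, Matrix.mul_fin_two]
    ext i j
    fin_cases i <;> fin_cases j <;> simp <;> field_simp <;> ring
  have hconj : ∀ t : F, Xm t ∈ C → Xm (z ^ 2 * t) ∈ C := by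
    intro t ht
    have h1 : Xm (z ^ 2 * t) = r * Xm t * r⁻¹ :=
      eq_mul_inv_iff_mul_eq.mpr (conj t).symm
    rw [h1]
    exact mul_mem (mul_mem hrC ht) (inv_mem hrC)
  have hconj' : ∀ t : F, Xm t ∈ C → Xm (z⁻¹ ^ 2 * t) ∈ C := by
    intro t ht
    have h0 := conj (z⁻¹ ^ 2 * t)
    have h2 : z ^ 2 * (z⁻¹ ^ 2 * t) = t := by field_simp
    rw [h2] at h0
    have h3 : Xm (z⁻¹ ^ 2 * t) = r⁻¹ * (Xm t * r) := by
      rw [← h0]; group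
    rw [h3]
    exact mul_mem (inv_mem hrC) (mul_mem ht hrC)
  -- the key element X c
  have hXc : Xm c ∈ C := by
    have hkey : Xm c = s * r * s⁻¹ * r := by
      have hsinv : ((s⁻¹ : Matrix.SpecialLinearGroup (Fin 2) F) :
          Matrix (Fin 2) (Fin 2) F) = !![0, 1; -1, 1] := by
        rw [Matrix.SpecialLinearGroup.coe_inv, hs, Matrix.adjugate_fin_two]
        norm_num
      apply Subtype.ext
      rw [Matrix.SpecialLinearGroup.coe_mul, Matrix.SpecialLinearGroup.coe_mul,
        Matrix.SpecialLinearGroup.coe_mul, hr, hs, hsinv, coe_Xm, hcdef,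
        Matrix.mul_fin_two, Matrix.mul_fin_two, Matrix.mul_fin_two]
      ext i j
      fin_cases i <;> fin_cases j <;> simp <;> field_simp <;> ring
    rw [hkey]
    exact mul_mem (mul_mem (mul_mem hsC hrC) (inv_mem hsC)) hrC
  -- all X ((ζ^k)² c) are in C
  have hXpow : ∀ k : ℤ, Xm (((ζ ^ k : Fˣ) : F) ^ 2 * c) ∈ C := by
    intro k
    induction k using Int.induction_on with
    | zero => simpa using hXc
    | succ k ih =>
        have he : ((ζ ^ ((k : ℤ) + 1) : Fˣ) : F) ^ 2 * c =
            z ^ 2 * (((ζ ^ (k : ℤ) : Fˣ) : F) ^ 2 * c) := by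
          rw [_root_.zpow_add_one]
          push_cast
          ring
        rw [he]
        exact hconj _ ih
    | pred k ih =>
        have he : ((ζ ^ (-(k : ℤ) - 1) : Fˣ) : F) ^ 2 * c =
            z⁻¹ ^ 2 * (((ζ ^ (-(k : ℤ)) : Fˣ) : F) ^ 2 * c) := by
          rw [_root_.zpow_sub_one]
          push_cast [hzinv]
          ring
        rw [he]
        exact hconj' _ ih
  -- hence X (c * a²) ∈ C for all a
  have hXsq : ∀ a : F, Xm (c * a ^ 2) ∈ C := by
    intro a
    by_cases ha : a = 0
    · simp only [ha]
      norm_num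
      rw [Xm_zero]
      exact one_mem C
    · obtain ⟨k, hk⟩ := Subgroup.mem_zpowers_iff.mp (hζ (Units.mk0 a ha))
      have := hXpow k
      rw [hk] at this
      have hval : ((Units.mk0 a ha : Fˣ) : F) = a := rfl
      rw [hval, mul_comm] at this
      exact this
  -- all X t are in C
  have hX : ∀ t : F, Xm t ∈ C := by
    intro t
    obtain ⟨x, y, hxy⟩ := sum_two_squares hodd (t / c)
    have he : c * x ^ 2 + c * y ^ 2 = t := by
      field_simp at hxy ⊢
      linear_combination hxy
    have := Xm_mul (c * x ^ 2) (c * y ^ 2) ▸ mul_mem (hXsq x) (hXsq y)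
    rwa [he] at this
  -- W ∈ C
  have hW : (Wm : Matrix.SpecialLinearGroup (Fin 2) F) ∈ C := by
    have hsw : s = Xm 1 * Wm := by
      apply Subtype.ext
      rw [Matrix.SpecialLinearGroup.coe_mul, hs, coe_Xm, coe_Wm, Matrix.mul_fin_two]
      norm_num
    have : Wm = (Xm (1 : F))⁻¹ * s := by rw [hsw]; group
    rw [this]
    exact mul_mem (inv_mem (hX 1)) hsC
  -- all Y t are in C
  have hY : ∀ t : F, Ym t ∈ C := by
    intro t
    have hwx : Ym t * Wm = Wm * Xm (-t) := by
      apply Subtype.ext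
      rw [Matrix.SpecialLinearGroup.coe_mul, Matrix.SpecialLinearGroup.coe_mul,
        coe_Ym, coe_Wm, coe_Xm, Matrix.mul_fin_two, Matrix.mul_fin_two]
      norm_num
    have h3 : Ym t = Wm * Xm (-t) * Wm⁻¹ := eq_mul_inv_iff_mul_eq.mpr hwx
    rw [h3]
    exact mul_mem (mul_mem hW (hX _)) (inv_mem hW)
  exact mem_of_transvections C hX hY g
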